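/- Let p and q be probability measures on a measurable space α with p absolutely continuous with respect to q. Then the Kullback–Leibler divergence satisfies the Donsker–Varadhan variational formula: for every bounded measurable function x : α → ℝ, KL(p ‖ q) ≥ ∫ x dp − log ∫ exp(x) dq, and KL(p ‖ q) equals the supremum of ∫ x dp − log ∫ exp(x) dq over all bounded measurable x : α → ℝ. (Donsker–Varadhan representation of the KL divergence, used in the appendix to obtain a batch-only estimator of the distribution ratio.) -/

import Mathlib

open MeasureTheory
open scoped ENNReal Classical

/-- The Kullback–Leibler divergence `∫ log(dp/dq) dp`, valued in `[0, ∞]`: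
it is `ENNReal.ofReal` of the integral when the log-likelihood ratio is
integrable with respect to `p`, and `∞` otherwise. -/

noncomputable def klDiv {α : Type*} [MeasurableSpace α] (p q : Measure α) : ℝ≥0∞ :=
  if Integrable (fun x => Real.log ((p.rnDeriv q x).toReal)) p then
    ENNReal.ofReal (∫ x, Real.log ((p.rnDeriv q x).toReal) ∂p)
  else ∞

section DVAux

open Real Filter
open scoped Topology

variable {α : Type*} [MeasurableSpace α]

lemma aux_neglog (t : ℝ) (ht : 0 ≤ t) : t * max (-Real.log t) 0 ≤ 2 := by
  rcases eq_or_lt_of_le ht with h | h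
  · simp [← h]
  rcases le_or_gt 1 t with h1 | h1
  · have : Real.log t ≥ 0 := Real.log_nonneg h1
    have : max (-Real.log t) 0 = 0 := max_eq_right (by linarith)
    simp [this]
  · have hs : 0 < Real.sqrt t := Real.sqrt_pos.2 h
    have hls : Real.log (Real.sqrt t) = Real.log t / 2 := Real.log_sqrt ht
    have h2 : Real.log (Real.sqrt t)⁻¹ ≤ (Real.sqrt t)⁻¹ - 1 :=
      Real.log_le_sub_one_of_pos (by positivity)
    rw [Real.log_inv, hls] at h2
    have h3 : -Real.log t ≤ 2 * ((Real.sqrt t)⁻¹ - 1) := by linarith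
    have h4 : t * (Real.sqrt t)⁻¹ = Real.sqrt t := by
      rw [inv_eq_one_div, mul_one_div, Real.div_sqrt]
    have h5 : Real.sqrt t ≤ 1 := Real.sqrt_le_one.2 h1.le
    have h6 : max (-Real.log t) 0 ≤ 2 * (Real.sqrt t)⁻¹ := by
      apply max_le (by linarith [inv_nonneg.2 hs.le]) (by positivity)
    calc t * max (-Real.log t) 0 ≤ t * (2 * (Real.sqrt t)⁻¹) :=
          mul_le_mul_of_nonneg_left h6 ht
      _ = 2 * Real.sqrt t := by rw [mul_comm (2:ℝ) _, ← mul_assoc, h4]; ring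
      _ ≤ 2 := by linarith

lemma rn_pos (p q : Measure α) [IsProbabilityMeasure p] [IsProbabilityMeasure q] (hpq : p ≪ q) :
    ∀ᵐ a ∂p, 0 < (p.rnDeriv q a).toReal := by
  filter_upwards [Measure.rnDeriv_pos hpq, hpq.ae_le (Measure.rnDeriv_lt_top p q)] with a h1 h2
  exact ENNReal.toReal_pos h1.ne' h2.ne

lemma int_of_bdd {p : Measure α} [IsProbabilityMeasure p] {x : α → ℝ} (hx : Measurable x)
    {C : ℝ} (hC : ∀ a, |x a| ≤ C) : Integrable x p :=
  ⟨hx.aestronglyMeasurable, HasFiniteIntegral.of_bounded (C := C) (ae_of_all _ hC)⟩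

lemma gibbs_ineq (p q : Measure α) [IsProbabilityMeasure p] [IsProbabilityMeasure q]
    (hpq : p ≪ q)
    (hint : Integrable (fun a => Real.log ((p.rnDeriv q a).toReal)) p)
    {x : α → ℝ} (hx : Measurable x) {C : ℝ} (hC : ∀ a, |x a| ≤ C) :
    (∫ a, x a ∂p) - Real.log (∫ a, Real.exp (x a) ∂q)
      ≤ ∫ a, Real.log ((p.rnDeriv q a).toReal) ∂p := by
  set f : α → ℝ := fun a => (p.rnDeriv q a).toReal with hf
  have hf_meas : Measurable f := (Measure.measurable_rnDeriv p q).ennreal_toReal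
  have hf_pos : ∀ᵐ a ∂p, 0 < f a := rn_pos p q hpq
  have hx_int : Integrable x p := int_of_bdd hx hC
  -- the tilted function g
  set g : α → ℝ := fun a => if 0 < f a then Real.exp (x a) / f a else 0 with hg
  have hg_meas : Measurable g :=
    Measurable.ite (measurableSet_lt measurable_const hf_meas)
      ((Real.measurable_exp.comp hx).div hf_meas) measurable_const
  have hg_nonneg : ∀ a, 0 ≤ g a := by
    intro a; by_cases h : 0 < f a <;> simp [hg, h] <;> positivity
  -- g is integrable w.r.t. p
  have key : ∀ a, p.rnDeriv q a * ENNReal.ofReal (g a) ≤ ENNReal.ofReal (Real.exp (x a)) := by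
    intro a
    by_cases h : 0 < f a
    · have hfin : p.rnDeriv q a ≠ ⊤ := by
        intro htop; simp [hf, htop] at h
      have : p.rnDeriv q a = ENNReal.ofReal (f a) := by
        simp [hf, ENNReal.ofReal_toReal hfin]
      rw [this, ← ENNReal.ofReal_mul (ENNReal.toReal_nonneg)]
      simp only [hg, if_pos h]
      rw [mul_div_cancel₀ _ h.ne']
    · simp [hg, h]
  have hlint : ∫⁻ a, ENNReal.ofReal (g a) ∂p ≤ ENNReal.ofReal (Real.exp C) := by
    rw [← lintegral_rnDeriv_mul hpq (hg_meas.ennreal_ofReal.aemeasurable)]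
    calc ∫⁻ a, p.rnDeriv q a * ENNReal.ofReal (g a) ∂q
        ≤ ∫⁻ _, ENNReal.ofReal (Real.exp C) ∂q := by
          apply lintegral_mono
          intro a
          exact (key a).trans (ENNReal.ofReal_le_ofReal
            (Real.exp_le_exp.2 ((abs_le.1 (hC a)).2)))
      _ = ENNReal.ofReal (Real.exp C) := by simp
  have hg_int : Integrable g p := by
    refine ⟨hg_meas.aestronglyMeasurable, ?_⟩
    rw [hasFiniteIntegral_iff_norm]
    calc ∫⁻ a, ENNReal.ofReal ‖g a‖ ∂p = ∫⁻ a, ENNReal.ofReal (g a) ∂p := by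
          congr 1; ext a; rw [Real.norm_eq_abs, abs_of_nonneg (hg_nonneg a)]
      _ ≤ ENNReal.ofReal (Real.exp C) := hlint
      _ < ⊤ := ENNReal.ofReal_lt_top
  set s : ℝ := ∫ a, g a ∂p with hs
  -- s ≤ ∫ exp x dq
  have hexp_int : Integrable (fun a => Real.exp (x a)) q :=
    int_of_bdd (Real.measurable_exp.comp hx)
      (C := Real.exp C) (fun a => by
        rw [abs_of_nonneg (Real.exp_nonneg _)]
        exact Real.exp_le_exp.2 (abs_le.1 (hC a)).2)
  have hfg_int : Integrable (fun a => f a * g a) q := by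
    have := (integrable_rnDeriv_smul_iff (f := g) hpq).2 hg_int
    simpa [smul_eq_mul] using this
  have hs_le : s ≤ ∫ a, Real.exp (x a) ∂q := by
    have hch : ∫ a, f a * g a ∂q = s := by
      have := integral_rnDeriv_smul (f := g) hpq
      simpa [smul_eq_mul] using this
    rw [← hch]
    apply integral_mono hfg_int hexp_int
    intro a
    by_cases h : 0 < f a
    · simp only [hg, if_pos h]
      rw [mul_div_cancel₀ _ h.ne']
    · simp [hg, h, Real.exp_nonneg]
  -- s > 0
  have hg_pos : ∀ᵐ a ∂p, 0 < g a := by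
    filter_upwards [hf_pos] with a ha
    simp only [hg, if_pos ha]; positivity
  have hs_pos : 0 < s := by
    rw [hs, integral_pos_iff_support_of_nonneg_ae (ae_of_all _ hg_nonneg) hg_int]
    by_contra hcon
    push_neg at hcon
    have h0 : p (Function.support g) = 0 := le_antisymm hcon bot_le
    have hze : ∀ᵐ a ∂p, g a = 0 := by
      rw [ae_iff]
      refine measure_mono_null ?_ h0
      intro a ha
      exact Function.mem_support.2 ha
    have hfalse : ∀ᵐ (_ : α) ∂p, False := by
      filter_upwards [hg_pos, hze] with a h1 h2
      exact h1.ne' h2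
    rw [ae_iff] at hfalse
    simp only [not_false_iff, Set.setOf_true, measure_univ] at hfalse
    exact one_ne_zero hfalse
  -- pointwise Jensen-type inequality
  have hpt : ∀ᵐ a ∂p, x a - Real.log (f a) ≤ g a / s + (Real.log s - 1) := by
    filter_upwards [hf_pos] with a ha
    have hga : 0 < g a := by simp only [hg, if_pos ha]; positivity
    have hlg : Real.log (g a) = x a - Real.log (f a) := by
      simp only [hg, if_pos ha]
      rw [Real.log_div (Real.exp_ne_zero _) ha.ne', Real.log_exp]
    have h1 : Real.log (g a / s) ≤ g a / s - 1 :=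
      Real.log_le_sub_one_of_pos (by positivity)
    rw [Real.log_div hga.ne' hs_pos.ne'] at h1
    linarith [h1, hlg]
  have hlhs_int : Integrable (fun a => x a - Real.log (f a)) p := hx_int.sub hint
  have hrhs_int : Integrable (fun a => g a / s + (Real.log s - 1)) p :=
    (hg_int.div_const s).add (integrable_const _)
  have hmain : ∫ a, x a ∂p - ∫ a, Real.log (f a) ∂p ≤ Real.log s := by
    have h1 : ∫ a, (x a - Real.log (f a)) ∂p ≤ ∫ a, (g a / s + (Real.log s - 1)) ∂p :=
      integral_mono_ae hlhs_int hrhs_int hpt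
    rw [integral_sub hx_int hint] at h1
    rw [integral_add (hg_int.div_const s) (integrable_const _), integral_div,
      integral_const, probReal_univ] at h1
    simp only [ENNReal.toReal_one, one_smul, ← hs] at h1
    rw [div_self hs_pos.ne'] at h1
    linarith
  have hlog_le : Real.log s ≤ Real.log (∫ a, Real.exp (x a) ∂q) :=
    Real.log_le_log hs_pos hs_le
  have hrfl : (∫ a, Real.log (f a) ∂p) = ∫ a, Real.log ((p.rnDeriv q a).toReal) ∂p := rfl
  linarith

end DVAux

open Real Filter
open scoped Topology

/-- Donsker–Varadhan variational representation of the KL divergence: for all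
bounded measurable `x`, `KL(p‖q) ≥ ∫ x dp − log ∫ exp(x) dq`, and `KL(p‖q)`
equals the supremum of these quantities over bounded measurable `x`. -/
theorem donsker_varadhan
    {α : Type*} [MeasurableSpace α]
    (p q : Measure α) [IsProbabilityMeasure p] [IsProbabilityMeasure q]
    (hpq : p ≪ q) :
    (∀ x : α → ℝ, Measurable x → (∃ C : ℝ, ∀ a, |x a| ≤ C) →
        ENNReal.ofReal ((∫ a, x a ∂p) - Real.log (∫ a, Real.exp (x a) ∂q)) ≤
          klDiv p q) ∧
      klDiv p q =
        ⨆ (x : α → ℝ) (_ : Measurable x) (_ : ∃ C : ℝ, ∀ a, |x a| ≤ C),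
          ENNReal.ofReal ((∫ a, x a ∂p) - Real.log (∫ a, Real.exp (x a) ∂q)) := by
  set S := ⨆ (x : α → ℝ) (_ : Measurable x) (_ : ∃ C : ℝ, ∀ a, |x a| ≤ C),
      ENNReal.ofReal ((∫ a, x a ∂p) - Real.log (∫ a, Real.exp (x a) ∂q)) with hS
  have hpart1 : ∀ x : α → ℝ, Measurable x → (∃ C : ℝ, ∀ a, |x a| ≤ C) →
      ENNReal.ofReal ((∫ a, x a ∂p) - Real.log (∫ a, Real.exp (x a) ∂q)) ≤ klDiv p q := by
    intro x hx ⟨C, hC⟩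
    by_cases hint : Integrable (fun a => Real.log ((p.rnDeriv q a).toReal)) p
    · unfold klDiv
      rw [if_pos hint]
      exact ENNReal.ofReal_le_ofReal (gibbs_ineq p q hpq hint hx hC)
    · unfold klDiv
      rw [if_neg hint]
      exact le_top
  have hSle : S ≤ klDiv p q :=
    iSup_le fun x => iSup_le fun hx => iSup_le fun hb => hpart1 x hx hb
  -- the sequence of truncations
  set f : α → ℝ := fun a => (p.rnDeriv q a).toReal with hfdef
  have hf_meas : Measurable f := (Measure.measurable_rnDeriv p q).ennreal_toReal
  have hf_nonneg : ∀ a, 0 ≤ f a := fun a => ENNReal.toReal_nonneg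
  have hf_pos : ∀ᵐ a ∂p, 0 < f a := rn_pos p q hpq
  have hf_intq : Integrable f q := Measure.integrable_toReal_rnDeriv
  have hf_intq1 : ∫ a, f a ∂q = 1 := by
    rw [hfdef, Measure.integral_toReal_rnDeriv hpq]; simp
  set X : ℕ → α → ℝ := fun n a =>
    if 0 < f a then max (min (Real.log (f a)) n) (-(n:ℝ)) else -(n:ℝ) with hXdef
  have hX_meas : ∀ n, Measurable (X n) := fun n =>
    Measurable.ite (measurableSet_lt measurable_const hf_meas)
      (((Real.measurable_log.comp hf_meas).min measurable_const).max measurable_const)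
      measurable_const
  have hX_lb : ∀ (n : ℕ) (a : α), -(n:ℝ) ≤ X n a := by
    intro n a
    by_cases h : 0 < f a
    · simp only [hXdef, if_pos h]
      exact le_max_right _ _
    · simp only [hXdef, if_neg h]
      exact le_refl _
  have hX_ub : ∀ (n : ℕ) (a : α), X n a ≤ (n:ℝ) := by
    intro n a
    by_cases h : 0 < f a
    · simp only [hXdef, if_pos h]
      exact max_le (min_le_right _ _)
        (le_trans (neg_nonpos.2 (Nat.cast_nonneg n)) (Nat.cast_nonneg n))
    · simp only [hXdef, if_neg h]
      exact le_trans (neg_nonpos.2 (Nat.cast_nonneg n)) (Nat.cast_nonneg n)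
  have hX_bdd : ∀ (n : ℕ) (a : α), |X n a| ≤ (n:ℝ) :=
    fun n a => abs_le.2 ⟨hX_lb n a, hX_ub n a⟩
  have hX_int : ∀ n, Integrable (X n) p := fun n => int_of_bdd (hX_meas n) (hX_bdd n)
  have hexpX_int : ∀ n, Integrable (fun a => Real.exp (X n a)) q := by
    intro n
    apply int_of_bdd ((hX_meas n).exp) (C := Real.exp n)
    intro a
    rw [abs_of_nonneg (Real.exp_nonneg _)]
    exact Real.exp_le_exp.2 (hX_ub n a)
  have hq_pos : ∀ n, 0 < ∫ a, Real.exp (X n a) ∂q := by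
    intro n
    have : (∫ _, Real.exp (-(n:ℝ)) ∂q) ≤ ∫ a, Real.exp (X n a) ∂q :=
      integral_mono (integrable_const _) (hexpX_int n)
        (fun a => Real.exp_le_exp.2 (hX_lb n a))
    rw [integral_const, probReal_univ] at this
    simp only [ENNReal.toReal_one, one_smul] at this
    exact lt_of_lt_of_le (Real.exp_pos _) this
  have hexpX_le : ∀ n a, Real.exp (X n a) ≤ f a + Real.exp (-(n:ℝ)) := by
    intro n a
    by_cases h : 0 < f a
    · simp only [hXdef, if_pos h]
      have h1 : Real.exp (max (min (Real.log (f a)) n) (-(n:ℝ)))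
          = max (Real.exp (min (Real.log (f a)) n)) (Real.exp (-(n:ℝ))) := by
        rcases le_total (min (Real.log (f a)) n) (-(n:ℝ)) with hle | hle
        · rw [max_eq_right hle, max_eq_right (Real.exp_le_exp.2 hle)]
        · rw [max_eq_left hle, max_eq_left (Real.exp_le_exp.2 hle)]
      rw [h1]
      apply max_le
      · calc Real.exp (min (Real.log (f a)) n) ≤ Real.exp (Real.log (f a)) :=
            Real.exp_le_exp.2 (min_le_left _ _)
          _ = f a := Real.exp_log h
          _ ≤ f a + Real.exp (-(n:ℝ)) := by linarith [Real.exp_nonneg (-(n:ℝ))]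
      · linarith [hf_nonneg a]
    · simp only [hXdef, if_neg h]
      linarith [hf_nonneg a]
  have hq_le : ∀ n, ∫ a, Real.exp (X n a) ∂q ≤ 1 + Real.exp (-(n:ℝ)) := by
    intro n
    calc ∫ a, Real.exp (X n a) ∂q ≤ ∫ a, (f a + Real.exp (-(n:ℝ))) ∂q :=
        integral_mono (hexpX_int n) (hf_intq.add (integrable_const _)) (hexpX_le n)
      _ = 1 + Real.exp (-(n:ℝ)) := by
        rw [integral_add hf_intq (integrable_const _), hf_intq1, integral_const, probReal_univ]
        simp
  set v : ℕ → ℝ := fun n => (∫ a, X n a ∂p) - Real.log (∫ a, Real.exp (X n a) ∂q) with hvdef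
  have hvS : ∀ n, ENNReal.ofReal (v n) ≤ S := by
    intro n
    rw [hS]
    refine le_iSup_of_le (X n) ?_
    refine le_iSup_of_le (hX_meas n) ?_
    exact le_iSup_of_le ⟨n, hX_bdd n⟩ le_rfl
  have hv_ge : ∀ n, (∫ a, X n a ∂p) - Real.log (1 + Real.exp (-(n:ℝ))) ≤ v n := by
    intro n
    have := Real.log_le_log (hq_pos n) (hq_le n)
    simp only [hvdef]
    linarith
  -- now split on integrability
  by_cases hint : Integrable (fun a => Real.log ((p.rnDeriv q a).toReal)) p
  · -- Case A
    have hintf : Integrable (fun a => Real.log (f a)) p := hint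
    have htend : Tendsto (fun n => ∫ a, X n a ∂p) atTop (𝓝 (∫ a, Real.log (f a) ∂p)) := by
      apply tendsto_integral_of_dominated_convergence (fun a => |Real.log (f a)|)
        (fun n => (hX_meas n).aestronglyMeasurable) hintf.abs
      · intro n
        filter_upwards [hf_pos] with a ha
        simp only [hXdef, if_pos ha, Real.norm_eq_abs]
        rcases le_total (Real.log (f a)) 0 with h0 | h0
        · have h1 : min (Real.log (f a)) (n:ℝ) = Real.log (f a) :=
            min_eq_left (h0.trans (Nat.cast_nonneg n))
          rw [h1, abs_of_nonpos (max_le h0 (neg_nonpos.2 (Nat.cast_nonneg n))),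
            abs_of_nonpos h0]
          exact neg_le_neg (le_max_left _ _)
        · have hmin : (0:ℝ) ≤ min (Real.log (f a)) (n:ℝ) := le_min h0 (Nat.cast_nonneg n)
          rw [max_eq_left (le_trans (neg_nonpos.2 (Nat.cast_nonneg n)) hmin),
            abs_of_nonneg hmin, abs_of_nonneg h0]
          exact min_le_left _ _
      · filter_upwards [hf_pos] with a ha
        obtain ⟨N, hN⟩ := exists_nat_ge |Real.log (f a)|
        apply tendsto_const_nhds.congr'
        filter_upwards [eventually_ge_atTop N] with n hn
        have hn' : |Real.log (f a)| ≤ n := hN.trans (Nat.cast_le.2 hn)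
        rw [abs_le] at hn'
        simp only [hXdef, if_pos ha]
        rw [min_eq_left hn'.2, max_eq_left (by linarith [hn'.1])]
    have hlogtend : Tendsto (fun n : ℕ => Real.log (1 + Real.exp (-(n:ℝ)))) atTop (𝓝 0) := by
      have h1 : Tendsto (fun n : ℕ => -(n:ℝ)) atTop atBot :=
        tendsto_neg_atBot_iff.2 tendsto_natCast_atTop_atTop
      have h2 : Tendsto (fun n : ℕ => Real.exp (-(n:ℝ))) atTop (𝓝 0) :=
        Real.tendsto_exp_atBot.comp h1
      have h3 : Tendsto (fun n : ℕ => 1 + Real.exp (-(n:ℝ))) atTop (𝓝 1) := by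
        simpa using tendsto_const_nhds.add h2
      have h4 := ((Real.continuousAt_log one_ne_zero).tendsto).comp h3
      simpa [Function.comp_def] using h4
    have hwtend : Tendsto (fun n => (∫ a, X n a ∂p) - Real.log (1 + Real.exp (-(n:ℝ)))) atTop
        (𝓝 (∫ a, Real.log (f a) ∂p)) := by
      simpa using htend.sub hlogtend
    have hofR := (ENNReal.continuous_ofReal.tendsto _).comp hwtend
    have hkle : klDiv p q ≤ S := by
      unfold klDiv
      rw [if_pos hint]
      refine le_of_tendsto hofR (Eventually.of_forall fun n => ?_)
      exact (ENNReal.ofReal_le_ofReal (hv_ge n)).trans (hvS n)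
    exact ⟨hpart1, le_antisymm hkle hSle⟩
  · -- Case B : klDiv = ⊤, show S = ⊤
    have hkl : klDiv p q = ⊤ := by unfold klDiv; rw [if_neg hint]
    set neg : α → ℝ := fun a => max (-Real.log (f a)) 0 with hnegdef
    have hneg_meas : Measurable neg :=
      ((Real.measurable_log.comp hf_meas).neg).max measurable_const
    have hneg_nonneg : ∀ a, 0 ≤ neg a := fun a => le_max_right _ _
    have hkey : ∀ a, p.rnDeriv q a * ENNReal.ofReal (neg a) ≤ ENNReal.ofReal 2 := by
      intro a
      by_cases h : p.rnDeriv q a = ⊤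
      · have hf0 : f a = 0 := by simp [hfdef, h]
        have hz : neg a = 0 := by simp [hnegdef, hf0, Real.log_zero]
        rw [hz]
        simp
      · have he : p.rnDeriv q a = ENNReal.ofReal (f a) := (ENNReal.ofReal_toReal h).symm
        rw [he, ← ENNReal.ofReal_mul (hf_nonneg a)]
        exact ENNReal.ofReal_le_ofReal (aux_neglog (f a) (hf_nonneg a))
    have hlneg : ∫⁻ a, ENNReal.ofReal (neg a) ∂p ≤ ENNReal.ofReal 2 := by
      rw [← lintegral_rnDeriv_mul hpq (hneg_meas.ennreal_ofReal.aemeasurable)]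
      calc ∫⁻ a, p.rnDeriv q a * ENNReal.ofReal (neg a) ∂q
          ≤ ∫⁻ _, ENNReal.ofReal 2 ∂q := lintegral_mono hkey
        _ = ENNReal.ofReal 2 := by simp
    have hneg_int : Integrable neg p := by
      refine ⟨hneg_meas.aestronglyMeasurable, ?_⟩
      rw [hasFiniteIntegral_iff_norm]
      calc ∫⁻ a, ENNReal.ofReal ‖neg a‖ ∂p = ∫⁻ a, ENNReal.ofReal (neg a) ∂p := by
            congr 1; ext a; rw [Real.norm_eq_abs, abs_of_nonneg (hneg_nonneg a)]
        _ ≤ ENNReal.ofReal 2 := hlneg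
        _ < ⊤ := ENNReal.ofReal_lt_top
    have hneg_le2 : ∫ a, neg a ∂p ≤ 2 := by
      rw [integral_eq_lintegral_of_nonneg_ae (ae_of_all _ hneg_nonneg)
        hneg_meas.aestronglyMeasurable]
      calc (∫⁻ a, ENNReal.ofReal (neg a) ∂p).toReal ≤ (ENNReal.ofReal 2).toReal :=
          ENNReal.toReal_mono ENNReal.ofReal_ne_top hlneg
        _ = 2 := ENNReal.toReal_ofReal (by norm_num)
    set pos : α → ℝ := fun a => max (Real.log (f a)) 0 with hposdef
    have hpos_meas : Measurable pos := (Real.measurable_log.comp hf_meas).max measurable_const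
    have hpos_top : ∫⁻ a, ENNReal.ofReal (pos a) ∂p = ⊤ := by
      by_contra hfin
      apply hint
      have habs : ∀ a, ENNReal.ofReal ‖Real.log (f a)‖ =
          ENNReal.ofReal (pos a) + ENNReal.ofReal (neg a) := by
        intro a
        rw [← ENNReal.ofReal_add (le_max_right _ _) (le_max_right _ _)]
        congr 1
        rw [Real.norm_eq_abs]
        rcases le_total 0 (Real.log (f a)) with h | h
        · rw [abs_of_nonneg h]
          show Real.log (f a) = max (Real.log (f a)) 0 + max (-Real.log (f a)) 0
          rw [max_eq_left h, max_eq_right (neg_nonpos.2 h), add_zero]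
        · rw [abs_of_nonpos h]
          show -Real.log (f a) = max (Real.log (f a)) 0 + max (-Real.log (f a)) 0
          rw [max_eq_right h, max_eq_left (neg_nonneg.2 h), zero_add]
      refine ⟨(Real.measurable_log.comp hf_meas).aestronglyMeasurable, ?_⟩
      rw [hasFiniteIntegral_iff_norm]
      have hre : ∫⁻ a, ENNReal.ofReal ‖Real.log (f a)‖ ∂p =
          ∫⁻ a, (ENNReal.ofReal (pos a) + ENNReal.ofReal (neg a)) ∂p := by
        congr 1
        ext a
        exact habs a
      rw [hre, lintegral_add_left hpos_meas.ennreal_ofReal]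
      exact ENNReal.add_lt_top.2 ⟨lt_top_iff_ne_top.2 hfin,
        lt_of_le_of_lt hlneg ENNReal.ofReal_lt_top⟩
    set φ : ℕ → α → ℝ≥0∞ := fun n a => ENNReal.ofReal (min (pos a) n) with hφdef
    have hφ_meas : ∀ n, Measurable (φ n) :=
      fun n => (hpos_meas.min measurable_const).ennreal_ofReal
    have hφ_mono : Monotone φ := fun m n hmn a =>
      ENNReal.ofReal_le_ofReal (min_le_min (le_refl _) (Nat.cast_le.2 hmn))
    have hsup_top : ⨆ n, ∫⁻ a, φ n a ∂p = ⊤ := by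
      rw [← lintegral_iSup hφ_meas hφ_mono, ← hpos_top]
      congr 1
      ext a
      apply le_antisymm
      · exact iSup_le fun n => ENNReal.ofReal_le_ofReal (min_le_left _ _)
      · obtain ⟨n, hn⟩ := exists_nat_ge (pos a)
        refine le_iSup_of_le n (le_of_eq ?_)
        show ENNReal.ofReal (pos a) = ENNReal.ofReal (min (pos a) (n:ℝ))
        rw [min_eq_left hn]
    have hbig : ∀ M : ℝ, ∃ n : ℕ, M ≤ v n := by
      intro M
      set R := max (M + 3) 0 with hR
      have hR0 : 0 ≤ R := le_max_right _ _
      have hlt : ENNReal.ofReal R < ⨆ n, ∫⁻ a, φ n a ∂p := by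
        rw [hsup_top]; exact ENNReal.ofReal_lt_top
      obtain ⟨n, hn⟩ := lt_iSup_iff.1 hlt
      refine ⟨n, ?_⟩
      have hmin_nonneg : ∀ a, 0 ≤ min (pos a) (n:ℝ) :=
        fun a => le_min (le_max_right _ _) (Nat.cast_nonneg n)
      have hmin_meas : Measurable (fun a => min (pos a) (n:ℝ)) :=
        hpos_meas.min measurable_const
      have hmin_int : Integrable (fun a => min (pos a) (n:ℝ)) p :=
        int_of_bdd hmin_meas (C := n) (fun a => by
          rw [abs_of_nonneg (hmin_nonneg a)]; exact min_le_right _ _)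
      have hreal : ∫ a, min (pos a) (n:ℝ) ∂p = (∫⁻ a, φ n a ∂p).toReal := by
        rw [integral_eq_lintegral_of_nonneg_ae (ae_of_all _ hmin_nonneg)
          hmin_meas.aestronglyMeasurable]
      have hfin : ∫⁻ a, φ n a ∂p ≠ ⊤ := by
        refine ne_of_lt (lt_of_le_of_lt (lintegral_mono
          (fun a => ENNReal.ofReal_le_ofReal (min_le_right (pos a) (n:ℝ)))) ?_)
        rw [lintegral_const, measure_univ, mul_one]
        exact ENNReal.ofReal_lt_top
      have hRlt : R < ∫ a, min (pos a) (n:ℝ) ∂p := by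
        rw [hreal]
        exact (ENNReal.ofReal_lt_iff_lt_toReal hR0 hfin).1 hn
      have hptw : ∀ᵐ a ∂p, min (pos a) (n:ℝ) - neg a ≤ X n a := by
        filter_upwards [hf_pos] with a ha
        simp only [hXdef, if_pos ha]
        rcases le_total 0 (Real.log (f a)) with h | h
        · have hnegz : neg a = 0 := max_eq_right (neg_nonpos.2 h)
          have hposz : pos a = Real.log (f a) := max_eq_left h
          rw [hnegz, hposz, sub_zero]
          exact le_max_left _ _
        · have hposz : pos a = 0 := max_eq_right h
          have hnegz : neg a = -Real.log (f a) := max_eq_left (neg_nonneg.2 h)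
          rw [hposz, hnegz]
          have hm0 : min (0:ℝ) (n:ℝ) = 0 := min_eq_left (Nat.cast_nonneg n)
          rw [hm0, zero_sub, neg_neg]
          have hminz : min (Real.log (f a)) (n:ℝ) = Real.log (f a) :=
            min_eq_left (h.trans (Nat.cast_nonneg n))
          rw [hminz]
          exact le_max_left _ _
      have hintle : ∫ a, (min (pos a) (n:ℝ) - neg a) ∂p ≤ ∫ a, X n a ∂p :=
        integral_mono_ae (hmin_int.sub hneg_int) (hX_int n) hptw
      rw [integral_sub hmin_int hneg_int] at hintle
      have hlog2 : Real.log (1 + Real.exp (-(n:ℝ))) ≤ 1 := by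
        have h1 : (1:ℝ) + Real.exp (-(n:ℝ)) ≤ 2 := by
          have he1 : Real.exp (-(n:ℝ)) ≤ 1 :=
            Real.exp_le_one_iff.2 (neg_nonpos.2 (Nat.cast_nonneg n))
          linarith
        calc Real.log (1 + Real.exp (-(n:ℝ))) ≤ Real.log 2 :=
            Real.log_le_log (by positivity) h1
          _ ≤ 1 := le_of_lt (lt_trans Real.log_two_lt_d9 (by norm_num))
      have hRM : M + 3 ≤ R := le_max_left _ _
      linarith [hneg_le2, hRlt, hintle, hv_ge n, hlog2, hRM]
    have hSM : ∀ M : ℝ, ENNReal.ofReal M ≤ S := fun M => by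
      obtain ⟨n, hn⟩ := hbig M
      exact (ENNReal.ofReal_le_ofReal hn).trans (hvS n)
    have hStop : S = ⊤ := by
      rw [← top_le_iff, ← ENNReal.iSup_natCast]
      refine iSup_le fun n => ?_
      have := hSM n
      rwa [ENNReal.ofReal_natCast] at this
    exact ⟨hpart1, by rw [hkl, hStop]⟩
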